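/- arXiv:1009.0763 — 2 statements merged into one kernel-verified Lean document; each statement's English description precedes it below -/
import Mathlib

section
/- Let m ≥ 1 and a1,...,am ≥ 1 with a1···am − (−1)^m ≠ 0, and let w_i = ρ(a_{i+1},...,a_m,a_1,...,a_{i−1})/(a_1···a_m − (−1)^m) be the cycle weights. Then ∏_{i=1}^m (1/w_i − 1) = a_1·a_2···a_m. -/
/-- The alternating function ρ: ρ() = 1, ρ(x₁,...,x_k) = x₁·x₂···x_k − ρ(x₂,...,x_k). -/
def rho : List ℤ → ℤ
  | [] => 1
  | x :: xs => x * xs.prod - rho xs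

lemma rho_append (xs : List ℤ) (y : ℤ) :
    rho (xs ++ [y]) = y * rho xs + (-1) ^ (xs.length + 1) := by
  induction xs with
  | nil =>
      simp only [List.nil_append, rho, List.prod_cons, List.prod_nil, List.length_nil]
      ring
  | cons x xs ih =>
      simp only [List.cons_append, rho, List.append_eq, ih, List.prod_append, List.prod_cons,
        List.prod_nil, List.length_cons]
      ring

lemma prod_list_range (n : ℕ) (f : ℕ → ℤ) :
    ((List.range n).map f).prod = ∏ i ∈ Finset.range n, f i := by
  induction n with
  | zero => simp
  | succ n ih => simp [List.range_succ, Finset.prod_range_succ, ih]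

/-- Cyclic shift invariance of products. -/
lemma prod_cyc (m : ℕ) (a : ℕ → ℤ) (i : ℕ) :
    ∏ j ∈ Finset.range m, a ((i + j) % m) = ∏ j ∈ Finset.range m, a j := by
  rcases Nat.eq_zero_or_pos m with hm | hm
  · simp [hm]
  · have hmod := Nat.mod_add_div i m
    have hlt := Nat.mod_lt i hm
    refine Finset.prod_nbij' (fun j => (i + j) % m) (fun j => (j + (m - i % m)) % m)
      (fun j hj => Finset.mem_range.mpr (Nat.mod_lt _ hm))
      (fun j hj => Finset.mem_range.mpr (Nat.mod_lt _ hm)) ?_ ?_ (fun j hj => rfl)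
    · intro j hj
      rw [Finset.mem_range] at hj
      show ((i + j) % m + (m - i % m)) % m = j
      rw [Nat.mod_add_mod]
      have he : m * (i / m + 1) = m * (i / m) + m := by ring
      have h : i + j + (m - i % m) = j + m * (i / m + 1) := by omega
      rw [h, Nat.add_mul_mod_self_left, Nat.mod_eq_of_lt hj]
    · intro j hj
      rw [Finset.mem_range] at hj
      show (i + (j + (m - i % m)) % m) % m = j
      rw [Nat.add_mod_mod]
      have he : m * (i / m + 1) = m * (i / m) + m := by ring
      have h : i + (j + (m - i % m)) = j + m * (i / m + 1) := by omega
      rw [h, Nat.add_mul_mod_self_left, Nat.mod_eq_of_lt hj]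

/-- The rho value of the cyclic window starting after `i`. -/
noncomputable def rf (m : ℕ) (a : ℕ → ℤ) (i : ℕ) : ℤ :=
  rho ((List.range (m - 1)).map (fun j => a ((i + 1 + j) % m)))

lemma rf_mod (m : ℕ) (a : ℕ → ℤ) (i : ℕ) : rf m a i = rf m a (i % m) := by
  unfold rf
  congr 1
  apply List.map_congr_left
  intro j hj
  congr 1
  simp [Nat.add_mod]

lemma key (m : ℕ) (hm : 1 ≤ m) (a : ℕ → ℤ) (i : ℕ) :
    (∏ j ∈ Finset.range m, a j) - (-1 : ℤ) ^ m - rf m a (i + 1) = a (i % m) * rf m a i := by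
  rcases Nat.exists_eq_add_of_le hm with ⟨k, hk⟩
  rcases Nat.eq_zero_or_pos k with hk0 | hkpos
  · subst hk0
    simp only [hk]
    simp [rf, rho, Nat.mod_one]
  · rcases Nat.exists_eq_add_of_le hkpos with ⟨k', hk'⟩
    -- m = k' + 2
    have hm2 : m = k' + 2 := by omega
    subst hm2
    set N : List ℤ := (List.range k').map (fun j => a ((i + 2 + j) % (k' + 2))) with hN
    have hL1 : rf (k' + 2) a (i + 1) =
        a (i % (k' + 2)) * rho N + (-1) ^ (k' + 1) := by
      unfold rf
      simp only [show k' + 2 - 1 = k' + 1 from rfl, List.range_succ, List.map_append,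
        List.map_cons, List.map_nil]
      rw [rho_append]
      have h1 : (List.range k').map (fun j => a ((i + 1 + 1 + j) % (k' + 2))) = N := rfl
      have h2 : (i + 1 + 1 + k') % (k' + 2) = i % (k' + 2) := by
        rw [show i + 1 + 1 + k' = i + (k' + 2) by omega, Nat.add_mod_right]
      rw [h1, h2]
      simp [hN]
    have hL0 : rf (k' + 2) a i = a ((i + 1) % (k' + 2)) * N.prod - rho N := by
      unfold rf
      simp only [show k' + 2 - 1 = k' + 1 from rfl, List.range_succ_eq_map, List.map_cons,
        List.map_map]
      have h1 : (List.range k').map ((fun j => a ((i + 1 + j) % (k' + 2))) ∘ Nat.succ) = N := by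
        apply List.map_congr_left
        intro j hj
        simp only [Function.comp_apply]
        congr 2
        omega
      rw [h1]
      simp [rho]
    have hprodN : a (i % (k' + 2)) * (a ((i + 1) % (k' + 2)) * N.prod)
        = ∏ j ∈ Finset.range (k' + 2), a j := by
      rw [← prod_cyc (k' + 2) a i]
      rw [Finset.prod_range_succ', Finset.prod_range_succ']
      have h1 : ∏ j ∈ Finset.range k', a ((i + (j + 1 + 1)) % (k' + 2))
          = N.prod := by
        rw [hN, prod_list_range]
        apply Finset.prod_congr rfl
        intro j hj
        congr 2
        omega
      rw [h1]
      have h2 : (i + (0 + 1)) % (k' + 2) = (i + 1) % (k' + 2) := by norm_num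
      have h3 : (i + 0) % (k' + 2) = i % (k' + 2) := by norm_num
      rw [h2, h3]
      ring
    rw [hL1, hL0]
    have hsgn : (-1 : ℤ) ^ (k' + 2) + (-1 : ℤ) ^ (k' + 1) = 0 := by
      rw [pow_succ]
      ring
    nlinarith [hprodN, hsgn]

theorem stmt8 (m : ℕ) (hm : 1 ≤ m) (a : ℕ → ℤ) (ha : ∀ i, 1 ≤ a i)
    (hD : (∏ i ∈ Finset.range m, a i) - (-1 : ℤ) ^ m ≠ 0)
    (w : ℕ → ℚ)
    (hw : ∀ i < m, w i =
      ((rho ((List.range (m - 1)).map (fun j => a ((i + 1 + j) % m))) : ℤ) : ℚ) /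
        (((∏ i ∈ Finset.range m, a i) - (-1 : ℤ) ^ m : ℤ) : ℚ))
    (hwpos : ∀ i < m, 0 < w i) :
    ∏ i ∈ Finset.range m, (1 / w i - 1) = ((∏ i ∈ Finset.range m, a i : ℤ) : ℚ) := by
  set P : ℤ := ∏ i ∈ Finset.range m, a i with hP
  set Dz : ℤ := P - (-1 : ℤ) ^ m with hDz
  set D : ℚ := (Dz : ℚ) with hDQ
  have hDne : D ≠ 0 := by rw [hDQ]; exact_mod_cast hD
  set F : ℕ → ℚ := fun i => ((rf m a i : ℤ) : ℚ) with hF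
  have hwF : ∀ i < m, w i = F i / D := by
    intro i hi
    rw [hw i hi]
    rfl
  have hFne : ∀ i < m, F i ≠ 0 := by
    intro i hi hzero
    have := hwpos i hi
    rw [hwF i hi, hzero, zero_div] at this
    exact lt_irrefl _ this
  have hmpos : 0 < m := hm
  -- key identity in ℚ
  have keyQ : ∀ i < m, D - F i = ((a ((i + (m - 1)) % m) : ℤ) : ℚ) * F ((i + (m - 1)) % m) := by
    intro i hi
    set j := (i + (m - 1)) % m with hj
    have hjm : j < m := Nat.mod_lt _ hmpos
    have hji : (j + 1) % m = i := by
      rw [hj, Nat.mod_add_mod, show i + (m - 1) + 1 = i + m by omega, Nat.add_mod_right,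
        Nat.mod_eq_of_lt hi]
    have hk := key m hm a j
    have hfj : rf m a (j + 1) = rf m a i := by
      rw [rf_mod m a (j + 1), hji]
    have hjmod : j % m = j := Nat.mod_eq_of_lt hjm
    rw [hfj, hjmod] at hk
    have : (Dz : ℚ) - ((rf m a i : ℤ) : ℚ) = ((a j * rf m a j : ℤ) : ℚ) := by
      exact_mod_cast congrArg (Int.cast : ℤ → ℚ) hk
    push_cast at this ⊢
    rw [hDQ]
    push_cast
    linarith [this]
  have step1 : ∏ i ∈ Finset.range m, (1 / w i - 1)
      = ∏ i ∈ Finset.range m, (D - F i) / F i := by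
    apply Finset.prod_congr rfl
    intro i hi
    rw [Finset.mem_range] at hi
    rw [hwF i hi]
    rw [one_div_div]
    rw [div_sub_one (hFne i hi)]
  have step2 : ∏ i ∈ Finset.range m, (D - F i)
      = (∏ i ∈ Finset.range m, ((a i : ℤ) : ℚ)) * ∏ i ∈ Finset.range m, F i := by
    rw [← Finset.prod_mul_distrib]
    rw [Finset.prod_congr rfl (fun i hi => keyQ i (Finset.mem_range.mp hi))]
    refine Finset.prod_nbij' (fun i => (i + (m - 1)) % m) (fun i => (i + 1) % m)
      (fun i hi => Finset.mem_range.mpr (Nat.mod_lt _ hmpos))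
      (fun i hi => Finset.mem_range.mpr (Nat.mod_lt _ hmpos)) ?_ ?_ (fun i hi => rfl)
    · intro i hi
      rw [Finset.mem_range] at hi
      show ((i + (m - 1)) % m + 1) % m = i
      rw [Nat.mod_add_mod, show i + (m - 1) + 1 = i + m by omega, Nat.add_mod_right,
        Nat.mod_eq_of_lt hi]
    · intro i hi
      rw [Finset.mem_range] at hi
      show ((i + 1) % m + (m - 1)) % m = i
      rw [Nat.mod_add_mod, show i + 1 + (m - 1) = i + m by omega, Nat.add_mod_right,
        Nat.mod_eq_of_lt hi]
  have hFprod_ne : (∏ i ∈ Finset.range m, F i) ≠ 0 :=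
    Finset.prod_ne_zero_iff.mpr (fun i hi => hFne i (Finset.mem_range.mp hi))
  rw [step1, Finset.prod_div_distrib, step2, mul_div_assoc,
    div_self hFprod_ne, mul_one, ← Int.cast_prod]
end

section
/- For every tuple of integers b1,...,bn ≥ 2, one has lcm(b1,...,bn)/((b1−1)(b2−1)···(bn−1)) ≤ ∏_{i=1}^n p_i/(p_i−1), where p_i denotes the i-th prime (p_1 = 2, p_2 = 3, ...). -/
open Finset

lemma pow_dvd_lcm_exists {ι : Type*} (s : Finset ι) (f : ι → ℕ) (hf : ∀ i ∈ s, f i ≠ 0)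
    {p k : ℕ} (hp : p.Prime) (hk : 1 ≤ k) (h : p ^ k ∣ s.lcm f) : ∃ i ∈ s, p ^ k ∣ f i := by
  classical
  induction s using Finset.induction_on with
  | empty =>
      rw [Finset.lcm_empty, Nat.dvd_one] at h
      exact absurd h (Nat.one_lt_pow (by omega) hp.one_lt).ne'
  | @insert a s ha ih =>
      have hfa : f a ≠ 0 := hf a (mem_insert_self a s)
      have hfs : ∀ i ∈ s, f i ≠ 0 := fun i hi => hf i (mem_insert_of_mem hi)
      have hlcm : s.lcm f ≠ 0 := by
        intro h0
        rw [Finset.lcm_eq_zero_iff] at h0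
        obtain ⟨i, hi, hfi⟩ := h0
        exact hfs i hi hfi
      rw [Finset.lcm_insert, lcm_eq_nat_lcm] at h
      have hL0 : Nat.lcm (f a) (s.lcm f) ≠ 0 := Nat.lcm_ne_zero hfa hlcm
      rw [hp.pow_dvd_iff_le_factorization hL0,
        Nat.factorization_lcm hfa hlcm, Finsupp.sup_apply] at h
      rcases le_max_iff.mp h with h' | h'
      · exact ⟨a, mem_insert_self a s, (hp.pow_dvd_iff_le_factorization hfa).mpr h'⟩
      · obtain ⟨i, hi, hdvd⟩ := ih hfs ((hp.pow_dvd_iff_le_factorization hlcm).mpr h')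
        exact ⟨i, mem_insert_of_mem hi, hdvd⟩

lemma prod_primepow_dvd (F : Finset ℕ) (hF : ∀ p ∈ F, Nat.Prime p) (e : ℕ → ℕ) (N : ℕ)
    (h : ∀ p ∈ F, p ^ e p ∣ N) : (∏ p ∈ F, p ^ e p) ∣ N := by
  classical
  induction F using Finset.induction_on with
  | empty => simpa using one_dvd N
  | @insert a s ha ih =>
      rw [Finset.prod_insert ha]
      have hap : a.Prime := hF a (mem_insert_self a s)
      have hcop : Nat.Coprime (a ^ e a) (∏ p ∈ s, p ^ e p) := by
        apply Nat.Coprime.pow_left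
        apply Nat.Coprime.prod_right
        intro p hp
        exact Nat.Coprime.pow_right _
          ((Nat.coprime_primes hap (hF p (mem_insert_of_mem hp))).mpr
            (fun hq => ha (hq ▸ hp)))
      exact hcop.mul_dvd_of_dvd_of_dvd (h a (mem_insert_self a s))
        (ih (fun p hp => hF p (mem_insert_of_mem hp)) (fun p hp => h p (mem_insert_of_mem hp)))

lemma primes_prod_bound (n : ℕ) : ∀ (Q : Finset ℕ), (∀ q ∈ Q, q.Prime) → Q.card ≤ n →
    ∏ q ∈ Q, ((q : ℚ)/((q:ℚ)-1)) ≤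
      ∏ j ∈ Finset.range n, ((Nat.nth Nat.Prime j : ℚ) / ((Nat.nth Nat.Prime j : ℚ) - 1)) := by
  have hterm : ∀ q : ℕ, q.Prime → (1:ℚ) ≤ (q:ℚ)/((q:ℚ)-1) := by
    intro q hq
    have h2 : (2:ℚ) ≤ (q:ℚ) := by exact_mod_cast hq.two_le
    rw [le_div_iff₀ (by linarith)]
    linarith
  have hpos : ∀ m : ℕ, (0:ℚ) ≤ ∏ j ∈ Finset.range m,
      ((Nat.nth Nat.Prime j : ℚ) / ((Nat.nth Nat.Prime j : ℚ) - 1)) := by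
    intro m
    apply Finset.prod_nonneg
    intro j _
    exact le_trans zero_le_one (hterm _ (Nat.prime_nth_prime j))
  induction n with
  | zero =>
      intro Q hQ hcard
      rw [Nat.le_zero, Finset.card_eq_zero] at hcard
      simp [hcard]
  | succ n ih =>
      intro Q hQ hcard
      rcases lt_or_eq_of_le hcard with hlt | heq
      · calc ∏ q ∈ Q, ((q : ℚ)/((q:ℚ)-1))
            ≤ ∏ j ∈ Finset.range n, ((Nat.nth Nat.Prime j : ℚ) / ((Nat.nth Nat.Prime j : ℚ) - 1)) :=
              ih Q hQ (Nat.lt_succ_iff.mp hlt)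
          _ ≤ _ := by
              rw [Finset.prod_range_succ]
              exact le_mul_of_one_le_right (hpos n) (hterm _ (Nat.prime_nth_prime n))
      · have hne : Q.Nonempty := by
          rw [← Finset.card_pos, heq]; omega
        set q := Q.max' hne with hq
        have hqQ : q ∈ Q := Q.max'_mem hne
        have hqp := hQ q hqQ
        have hnth : Nat.nth Nat.Prime n ≤ q := by
          by_contra hlt
          push_neg at hlt
          have hsub : Q ⊆ (Finset.range (Nat.nth Nat.Prime n)).filter Nat.Prime := by
            intro x hx
            rw [Finset.mem_filter, Finset.mem_range]
            exact ⟨lt_of_le_of_lt (Q.le_max' x hx) hlt, hQ x hx⟩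
          have hcc := Finset.card_le_card hsub
          rw [← Nat.count_eq_card_filter_range,
            Nat.count_nth_of_infinite Nat.infinite_setOf_prime] at hcc
          omega
        have hrec := ih (Q.erase q) (fun x hx => hQ x (Finset.mem_of_mem_erase hx))
          (by rw [Finset.card_erase_of_mem hqQ, heq]; omega)
        rw [← Finset.mul_prod_erase Q _ hqQ, Finset.prod_range_succ,
          mul_comm (∏ j ∈ Finset.range n, ((Nat.nth Nat.Prime j : ℚ) / ((Nat.nth Nat.Prime j : ℚ) - 1)))]
        apply mul_le_mul ?_ hrec (Finset.prod_nonneg (fun x hx =>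
          le_trans zero_le_one (hterm x (hQ x (Finset.mem_of_mem_erase hx)))))
          (le_trans zero_le_one (hterm _ (Nat.prime_nth_prime n)))
        · have h2q : (2:ℚ) ≤ (q:ℚ) := by exact_mod_cast hqp.two_le
          have h2n : (2:ℚ) ≤ (Nat.nth Nat.Prime n : ℚ) := by
            exact_mod_cast (Nat.prime_nth_prime n).two_le
          have hle : (Nat.nth Nat.Prime n : ℚ) ≤ (q:ℚ) := by exact_mod_cast hnth
          rw [div_le_div_iff₀ (by linarith) (by linarith)]
          nlinarith

theorem stmt10 (n : ℕ) (b : Fin n → ℕ) (hb : ∀ i, 2 ≤ b i) :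
    (((Finset.univ.lcm b : ℕ) : ℚ)) / ∏ i, ((b i : ℚ) - 1) ≤
      ∏ i ∈ Finset.range n, ((Nat.nth Nat.Prime i : ℚ) / ((Nat.nth Nat.Prime i : ℚ) - 1)) := by
  classical
  rcases Nat.eq_zero_or_pos n with rfl | hn
  · simp
  set L := Finset.univ.lcm b with hLdef
  have hbne : ∀ i, b i ≠ 0 := fun i => by have := hb i; omega
  have hL0 : L ≠ 0 := by
    intro h0
    rw [hLdef, Finset.lcm_eq_zero_iff] at h0
    obtain ⟨i, _, hfi⟩ := h0
    exact hbne i hfi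
  have hex : ∀ p ∈ L.primeFactors, ∃ i : Fin n, p ^ (L.factorization p) ∣ b i := by
    intro p hp
    have hpp := Nat.prime_of_mem_primeFactors hp
    have hfpos : 1 ≤ L.factorization p :=
      (Nat.Prime.factorization_pos_of_dvd hpp hL0 (Nat.dvd_of_mem_primeFactors hp))
    obtain ⟨i, _, hi⟩ := pow_dvd_lcm_exists Finset.univ b (fun i _ => hbne i) hpp hfpos
      (Nat.ordProj_dvd L p)
    exact ⟨i, hi⟩
  set c : ℕ → Fin n := fun p =>
    if h : ∃ i : Fin n, p ^ (L.factorization p) ∣ b i then h.choose else ⟨0, hn⟩ with hcdef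
  have hc : ∀ p ∈ L.primeFactors, p ^ (L.factorization p) ∣ b (c p) := by
    intro p hp
    have h := hex p hp
    rw [hcdef]
    simp only [dif_pos h]
    exact h.choose_spec
  set F : Fin n → Finset ℕ := fun i => L.primeFactors.filter (fun p => c p = i) with hFdef
  set m : Fin n → ℕ := fun i => ∏ p ∈ F i, p ^ (L.factorization p) with hmdef
  -- A : product of the m i is L
  have hA : ∏ i, m i = L := by
    rw [hmdef]
    rw [Finset.prod_fiberwise_of_maps_to (fun p _ => Finset.mem_univ (c p))
      (fun p => p ^ (L.factorization p))]
    conv_rhs => rw [← Nat.factorization_prod_pow_eq_self hL0]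
    rw [Finsupp.prod, Nat.support_factorization]
  -- B : m i divides b i
  have hFP : ∀ i, ∀ p ∈ F i, p.Prime := fun i p hp =>
    Nat.prime_of_mem_primeFactors (Finset.mem_filter.mp hp).1
  have hB : ∀ i, m i ∣ b i := by
    intro i
    apply prod_primepow_dvd (F i) (hFP i)
    intro p hp
    obtain ⟨hp1, hp2⟩ := Finset.mem_filter.mp hp
    have := hc p hp1
    rwa [hp2] at this
  have hm0 : ∀ i, m i ≠ 0 := by
    intro i
    apply Finset.prod_ne_zero_iff.mpr
    intro p hp
    exact pow_ne_zero _ (hFP i p hp).pos.ne'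
  -- minFac of m i is in F i when m i ≠ 1
  have hminF : ∀ i, m i ≠ 1 → Nat.minFac (m i) ∈ F i := by
    intro i hi
    have hq := Nat.minFac_prime hi
    have hdvd : Nat.minFac (m i) ∣ ∏ p ∈ F i, p ^ (L.factorization p) := Nat.minFac_dvd (m i)
    rw [Prime.dvd_finset_prod_iff hq.prime] at hdvd
    obtain ⟨p, hp, hdp⟩ := hdvd
    have : Nat.minFac (m i) = p :=
      (Nat.prime_dvd_prime_iff_eq hq (hFP i p hp)).mp (hq.dvd_of_dvd_pow hdp)
    rwa [this]
  -- E : pointwise bound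
  set g : Fin n → ℚ := fun i => if m i = 1 then 1
    else (Nat.minFac (m i) : ℚ)/((Nat.minFac (m i) : ℚ) - 1) with hgdef
  have hbQ : ∀ i, (1:ℚ) ≤ (b i : ℚ) - 1 := by
    intro i
    have : (2:ℚ) ≤ (b i : ℚ) := by exact_mod_cast hb i
    linarith
  have hE : ∀ i, (m i : ℚ)/((b i : ℚ) - 1) ≤ g i := by
    intro i
    rw [hgdef]
    by_cases h1 : m i = 1
    · simp only [h1, if_pos]
      rw [Nat.cast_one, div_le_one (by linarith [hbQ i])]
      linarith [hbQ i]
    · simp only [h1, if_neg, if_false]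
      set q := Nat.minFac (m i) with hqdef
      have hqp : q.Prime := Nat.minFac_prime h1
      have hqm : q ≤ m i := Nat.minFac_le (Nat.pos_of_ne_zero (hm0 i))
      have hmb : m i ≤ b i := Nat.le_of_dvd (Nat.pos_of_ne_zero (hbne i)) (hB i)
      have h2q : (2:ℚ) ≤ (q:ℚ) := by exact_mod_cast hqp.two_le
      have hqmQ : (q:ℚ) ≤ (m i : ℚ) := by exact_mod_cast hqm
      have hmbQ : (m i : ℚ) ≤ (b i : ℚ) := by exact_mod_cast hmb
      rw [div_le_div_iff₀ (by linarith [hbQ i]) (by linarith)]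
      nlinarith [hbQ i]
  -- combine
  have hLHS : ((L : ℕ) : ℚ) / ∏ i, ((b i : ℚ) - 1) = ∏ i, ((m i : ℚ)/((b i : ℚ) - 1)) := by
    rw [← hA, Finset.prod_div_distrib]
    push_cast
    rfl
  rw [hLHS]
  have step1 : ∏ i, ((m i : ℚ)/((b i : ℚ) - 1)) ≤ ∏ i, g i := by
    apply Finset.prod_le_prod
    · intro i _
      exact div_nonneg (Nat.cast_nonneg _) (by linarith [hbQ i])
    · intro i _
      exact hE i
  -- now bound ∏ g
  set T : Finset (Fin n) := Finset.univ.filter (fun i => m i ≠ 1) with hTdef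
  have hgT : ∏ i, g i = ∏ i ∈ T, ((Nat.minFac (m i) : ℚ)/((Nat.minFac (m i) : ℚ) - 1)) := by
    rw [← Finset.prod_filter_mul_prod_filter_not Finset.univ (fun i => m i ≠ 1) g]
    have h2 : ∏ i ∈ Finset.univ.filter (fun i => ¬ m i ≠ 1), g i = 1 := by
      apply Finset.prod_eq_one
      intro i hi
      rw [Finset.mem_filter] at hi
      rw [hgdef]
      simp only [not_not.mp hi.2, if_pos]
    rw [h2, mul_one, hTdef]
    apply Finset.prod_congr rfl
    intro i hi
    rw [Finset.mem_filter] at hi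
    rw [hgdef]
    simp only [hi.2, if_neg, if_false]
  have hinj : Set.InjOn (fun i => Nat.minFac (m i)) T := by
    intro i hi j hj hij
    rw [hTdef, Finset.coe_filter] at hi hj
    have hi' := hminF i hi.2
    have hj' := hminF j hj.2
    simp only at hij
    rw [hij] at hi'
    exact ((Finset.mem_filter.mp hi').2.symm.trans (Finset.mem_filter.mp hj').2)
  have himg : ∏ i ∈ T, ((Nat.minFac (m i) : ℚ)/((Nat.minFac (m i) : ℚ) - 1)) =
      ∏ q ∈ T.image (fun i => Nat.minFac (m i)), ((q:ℚ)/((q:ℚ)-1)) := by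
    rw [Finset.prod_image (fun i hi j hj => hinj (by simpa using hi) (by simpa using hj))]
  have hfin : ∏ q ∈ T.image (fun i => Nat.minFac (m i)), ((q:ℚ)/((q:ℚ)-1)) ≤
      ∏ j ∈ Finset.range n, ((Nat.nth Nat.Prime j : ℚ) / ((Nat.nth Nat.Prime j : ℚ) - 1)) := by
    apply primes_prod_bound
    · intro q hq
      obtain ⟨i, hi, rfl⟩ := Finset.mem_image.mp hq
      exact Nat.minFac_prime (Finset.mem_filter.mp hi).2
    · calc (T.image (fun i => Nat.minFac (m i))).card ≤ T.card := Finset.card_image_le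
        _ ≤ Finset.univ.card := Finset.card_le_card (Finset.filter_subset _ _)
        _ = n := by simp
  calc ∏ i, ((m i : ℚ)/((b i : ℚ) - 1)) ≤ ∏ i, g i := step1
    _ = _ := hgT
    _ = _ := himg
    _ ≤ _ := hfin
end
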